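/- arXiv:2303.07784 — 4 statements merged into one kernel-verified Lean document; each statement's English description precedes it below -/
import Mathlib

section
/- Let G be a compact Lie group. There exists a constant C such that for every finite abelian subgroup A ≤ G there is a torus T ≤ G (that is, a closed connected commutative subgroup of G) satisfying [A : A ∩ T] ≤ C. -/
open scoped Manifold
open Set Filter Metric Topology NNReal

/-- T2-ness of a charted topological group. -/
theorem myT2 {n : ℕ} (G : Type*) [Group G] [TopologicalSpace G] [IsTopologicalGroup G]
    [ChartedSpace (EuclideanSpace ℝ (Fin n)) G] : T2Space G := by
  rw [IsTopologicalGroup.t2Space_iff_one_closed]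
  have key : ∀ z : G, z ∈ closure ({1} : Set G) → z = 1 := by
    intro z hz
    have h1 : (1 : G) ⤳ z := specializes_iff_mem_closure.2 hz
    have h2 : z ⤳ (1 : G) := by
      have := h1.map (f := fun y => z * y⁻¹) (by continuity)
      simpa using this
    have hins : Inseparable z (1 : G) := le_antisymm h2 h1
    set ψ := chartAt (EuclideanSpace ℝ (Fin n)) (1 : G)
    have h1s : (1 : G) ∈ ψ.source := mem_chart_source _ _
    have hzs : z ∈ ψ.source := by
      have : ψ.source ∈ 𝓝 z := by
        rw [hins.nhds_eq]
        exact ψ.open_source.mem_nhds h1s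
      exact mem_of_mem_nhds this
    have hc1 : ContinuousAt ψ 1 := ψ.continuousAt h1s
    have hcz : ContinuousAt ψ z := ψ.continuousAt hzs
    have : ψ z = ψ 1 := by
      have t1 : Filter.Tendsto ψ (𝓝 z) (𝓝 (ψ z)) := hcz
      have t2 : Filter.Tendsto ψ (𝓝 z) (𝓝 (ψ 1)) := by
        rw [hins.nhds_eq]; exact hc1
      exact tendsto_nhds_unique t1 t2
    exact ψ.injOn hzs h1s this
  rw [← closure_subset_iff_isClosed]
  intro z hz
  exact key z hz

theorem exists_good_sqrt {n : ℕ} (G : Type*) [Group G]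
    [TopologicalSpace G] [IsTopologicalGroup G]
    [ChartedSpace (EuclideanSpace ℝ (Fin n)) G] [LieGroup (𝓡 n) (⊤ : ℕ∞) G] :
    ∃ (W V : Set G) (r : G → G), IsOpen V ∧ (1:G) ∈ V ∧
      (∀ x ∈ V, r x ∈ V) ∧ (∀ x ∈ V, r x * r x = x) ∧
      (∀ x ∈ V, ∀ c ∈ W, c * c = x → c = r x) ∧
      (∀ a ∈ V, ∀ b ∈ V, ∀ c ∈ V, a * b * c⁻¹ ∈ W) ∧
      (∀ x ∈ V, Tendsto (fun m => r^[m] x) atTop (𝓝 (1:G))) := by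
  classical
  set φ : PartialEquiv G (EuclideanSpace ℝ (Fin n)) := extChartAt (𝓡 n) (1:G) with hφdef
  have h1src : (1:G) ∈ φ.source := mem_extChartAt_source 1
  have hinv1 : φ.symm (φ 1) = 1 := extChartAt_to_inv 1
  set m : (EuclideanSpace ℝ (Fin n)) × (EuclideanSpace ℝ (Fin n)) → EuclideanSpace ℝ (Fin n) :=
    fun p => φ (φ.symm p.1 * φ.symm p.2) with hmdef
  -- smoothness of m at (φ 1, φ 1)
  have hmul : ContMDiffAt ((𝓡 n).prod (𝓡 n)) (𝓡 n) ((⊤ : ℕ∞) : WithTop ℕ∞) (fun p : G × G => p.1 * p.2)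
      ((1:G), (1:G)) := (contMDiff_mul (𝓡 n) ((⊤ : ℕ∞) : WithTop ℕ∞) (G := G)).contMDiffAt
  have hkey := (contMDiffAt_iff.mp hmul).2
  rw [ModelWithCorners.range_eq_univ, contDiffWithinAt_univ] at hkey
  have hmC : ContDiffAt ℝ ((⊤ : ℕ∞) : WithTop ℕ∞) m (φ 1, φ 1) := by
    have heq : (extChartAt (𝓡 n) ((1:G)*(1:G)) ∘ (fun p : G × G => p.1 * p.2) ∘
        (extChartAt ((𝓡 n).prod (𝓡 n)) ((1:G),(1:G))).symm) = m := by
      funext p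
      simp only [hmdef, hφdef, Function.comp_apply, one_mul, extChartAt_prod,
        PartialEquiv.prod_symm, PartialEquiv.prod_coe]
    have hpt : (extChartAt ((𝓡 n).prod (𝓡 n)) ((1:G),(1:G))) ((1:G),(1:G)) = (φ 1, φ 1) := by
      simp [hφdef, extChartAt_prod]
    rw [heq, hpt] at hkey
    exact hkey
  set L := fderiv ℝ m (φ 1, φ 1) with hLdef
  have hm' : HasStrictFDerivAt m L (φ 1, φ 1) :=
    hmC.hasStrictFDerivAt (by simp)
  have htarget : φ.target ∈ 𝓝 (φ 1) := extChartAt_target_mem_nhds (1:G)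
  -- partial derivatives
  have hL1 : ∀ u, L (u, 0) = u := by
    have hids : (fun x => m (x, φ 1)) =ᶠ[𝓝 (φ 1)] (fun x => x) := by
      filter_upwards [htarget] with x hx
      simp [hmdef, hinv1, φ.right_inv hx]
    have hinner : HasFDerivAt (fun x : EuclideanSpace ℝ (Fin n) => (x, φ 1))
        ((ContinuousLinearMap.id ℝ (EuclideanSpace ℝ (Fin n))).prod 0) (φ 1) :=
      HasFDerivAt.prodMk (hasFDerivAt_id _) (hasFDerivAt_const _ _)
    have hcomp : HasFDerivAt (fun x => m (x, φ 1))
        (L.comp ((ContinuousLinearMap.id ℝ (EuclideanSpace ℝ (Fin n))).prod 0)) (φ 1) :=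
      HasFDerivAt.comp (f := fun x : EuclideanSpace ℝ (Fin n) => (x, φ 1)) (x := φ 1)
        hm'.hasFDerivAt hinner
    have hid : HasFDerivAt (fun x : EuclideanSpace ℝ (Fin n) => x)
        (L.comp ((ContinuousLinearMap.id ℝ _).prod 0)) (φ 1) :=
      hcomp.congr_of_eventuallyEq hids.symm
    have := hid.unique (hasFDerivAt_id _)
    intro u
    have h2 := congrArg (fun (T : _ →L[ℝ] _) => T u) this
    simpa using h2
  have hL2 : ∀ u, L (0, u) = u := by
    have hids : (fun x => m (φ 1, x)) =ᶠ[𝓝 (φ 1)] (fun x => x) := by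
      filter_upwards [htarget] with x hx
      simp [hmdef, hinv1, φ.right_inv hx]
    have hinner : HasFDerivAt (fun x : EuclideanSpace ℝ (Fin n) => (φ 1, x))
        ((0 : EuclideanSpace ℝ (Fin n) →L[ℝ] EuclideanSpace ℝ (Fin n)).prod
          (ContinuousLinearMap.id ℝ (EuclideanSpace ℝ (Fin n)))) (φ 1) :=
      HasFDerivAt.prodMk (hasFDerivAt_const _ _) (hasFDerivAt_id _)
    have hcomp : HasFDerivAt ((fun p => m p) ∘ (fun x : EuclideanSpace ℝ (Fin n) => (φ 1, x)))
        (L.comp ((0 : EuclideanSpace ℝ (Fin n) →L[ℝ] EuclideanSpace ℝ (Fin n)).prod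
          (ContinuousLinearMap.id ℝ (EuclideanSpace ℝ (Fin n))))) (φ 1) :=
      HasFDerivAt.comp (f := fun x : EuclideanSpace ℝ (Fin n) => (φ 1, x)) (x := φ 1)
        hm'.hasFDerivAt hinner
    have hid : HasFDerivAt (fun x : EuclideanSpace ℝ (Fin n) => x)
        (L.comp ((0 : EuclideanSpace ℝ (Fin n) →L[ℝ] EuclideanSpace ℝ (Fin n)).prod
          (ContinuousLinearMap.id ℝ (EuclideanSpace ℝ (Fin n))))) (φ 1) :=
      hcomp.congr_of_eventuallyEq hids.symm
    have := hid.unique (hasFDerivAt_id _)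
    intro u
    have h2 := congrArg (fun (T : _ →L[ℝ] _) => T u) this
    simpa using h2
  -- the doubling equivalence
  let e : (EuclideanSpace ℝ (Fin n)) ≃L[ℝ] (EuclideanSpace ℝ (Fin n)) :=
    { toFun := fun u => u + u
      invFun := fun u => (2⁻¹ : ℝ) • u
      map_add' := fun u v => by abel_nf
      map_smul' := fun c u => by simp [smul_add]
      left_inv := fun u => by
        show (2⁻¹ : ℝ) • (u + u) = u
        rw [← two_smul ℝ u, smul_smul]; norm_num
      right_inv := fun u => by
        show (2⁻¹ : ℝ) • u + (2⁻¹ : ℝ) • u = u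
        rw [← two_smul ℝ ((2⁻¹ : ℝ) • u), smul_smul]; norm_num
      continuous_toFun := continuous_id.add continuous_id
      continuous_invFun := continuous_const_smul _ }
  have hf1 : m (φ 1, φ 1) = φ 1 := by simp [hmdef, hinv1]
  have hfs : HasStrictFDerivAt (fun x => m (x, x))
      ((e : EuclideanSpace ℝ (Fin n) →L[ℝ] EuclideanSpace ℝ (Fin n))) (φ 1) := by
    have hdiag : HasStrictFDerivAt (fun x : EuclideanSpace ℝ (Fin n) => (x, x))
        ((ContinuousLinearMap.id ℝ _).prod (ContinuousLinearMap.id ℝ _)) (φ 1) :=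
      (hasStrictFDerivAt_id _).prodMk (hasStrictFDerivAt_id _)
    have h : HasStrictFDerivAt ((fun p : EuclideanSpace ℝ (Fin n) × EuclideanSpace ℝ (Fin n) => m p) ∘ (fun x : EuclideanSpace ℝ (Fin n) => (x, x)))
        (L.comp ((ContinuousLinearMap.id ℝ (EuclideanSpace ℝ (Fin n))).prod
          (ContinuousLinearMap.id ℝ (EuclideanSpace ℝ (Fin n))))) (φ 1) :=
      HasStrictFDerivAt.comp (f := fun x : EuclideanSpace ℝ (Fin n) => (x, x)) (φ 1) hm' hdiag
    have hEq : L.comp ((ContinuousLinearMap.id ℝ _).prod (ContinuousLinearMap.id ℝ _))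
        = (e : EuclideanSpace ℝ (Fin n) →L[ℝ] EuclideanSpace ℝ (Fin n)) := by
      apply ContinuousLinearMap.ext
      intro u
      have hsum : ((u, (0 : EuclideanSpace ℝ (Fin n))) : _ × _)
          + ((0 : EuclideanSpace ℝ (Fin n)), u) = (u, u) := by simp
      have hLu : L (u, u) = u + u := by
        rw [← hsum, map_add, hL1 u, hL2 u]
      have h3 : (e : EuclideanSpace ℝ (Fin n) →L[ℝ] EuclideanSpace ℝ (Fin n)) u = u + u := rfl
      show L (u, u) = _
      rw [hLu, h3]
    rw [← hEq]
    exact h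
  set f : EuclideanSpace ℝ (Fin n) → EuclideanSpace ℝ (Fin n) := fun x => m (x, x) with hfdef
  have hfφ1 : f (φ 1) = φ 1 := hf1
  set ploc := HasStrictFDerivAt.toOpenPartialHomeomorph f hfs with hplocdef
  set g : EuclideanSpace ℝ (Fin n) → EuclideanSpace ℝ (Fin n) :=
    HasStrictFDerivAt.localInverse f e (φ 1) hfs with hgdef
  have hgs : HasStrictFDerivAt g
      ((e.symm : EuclideanSpace ℝ (Fin n) →L[ℝ] EuclideanSpace ℝ (Fin n))) (φ 1) := by
    have := HasStrictFDerivAt.to_localInverse hfs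
    rwa [hfφ1] at this
  have hgfix : g (φ 1) = φ 1 := by
    have := HasStrictFDerivAt.localInverse_apply_image hfs
    rwa [hfφ1] at this
  -- Lipschitz bound for g
  have hnn : ‖(e.symm : EuclideanSpace ℝ (Fin n) →L[ℝ] EuclideanSpace ℝ (Fin n))‖₊
      < (2/3 : ℝ≥0) := by
    have hb : ‖(e.symm : EuclideanSpace ℝ (Fin n) →L[ℝ] EuclideanSpace ℝ (Fin n))‖₊
        ≤ (2⁻¹ : ℝ≥0) := by
      apply ContinuousLinearMap.opNNNorm_le_bound
      intro u
      have hv : (e.symm : EuclideanSpace ℝ (Fin n) →L[ℝ] EuclideanSpace ℝ (Fin n)) u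
          = (2⁻¹ : ℝ) • u := rfl
      rw [hv, nnnorm_smul]
      have h48 : ‖(2⁻¹ : ℝ)‖₊ = (2⁻¹ : ℝ≥0) := by
        ext
        simp [abs_of_nonneg]
      rw [h48]
    refine lt_of_le_of_lt hb ?_
    rw [← NNReal.coe_lt_coe]
    norm_num
  obtain ⟨tset, htsetmem, hlip⟩ := HasStrictFDerivAt.exists_lipschitzOnWith_of_nnnorm_lt hgs (2/3 : ℝ≥0) hnn
  have hplocsrc : ploc.source ∈ 𝓝 (φ 1) :=
    ploc.open_source.mem_nhds (HasStrictFDerivAt.mem_toOpenPartialHomeomorph_source hfs)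
  have hrinv : ∀ᶠ y in 𝓝 (φ 1), f (g y) = y := by
    have := HasStrictFDerivAt.eventually_right_inverse hfs
    rwa [hfφ1] at this
  obtain ⟨s₅, hs₅mem, hs₅⟩ := hrinv.exists_mem
  have hsymm1 : ContinuousAt φ.symm (φ 1) := continuousAt_extChartAt_symm (1:G)
  have hs₆mem : (fun y => φ.symm y * φ.symm y) ⁻¹' φ.source ∈ 𝓝 (φ 1) := by
    apply (hsymm1.mul hsymm1).preimage_mem_nhds
    have : φ.symm (φ 1) * φ.symm (φ 1) = 1 := by rw [hinv1, one_mul]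
    rw [Pi.mul_apply, this]
    exact (isOpen_extChartAt_source (1:G)).mem_nhds h1src
  obtain ⟨ρ, hρpos, hρ⟩ := Metric.mem_nhds_iff.mp
    (inter_mem htarget (inter_mem hplocsrc (inter_mem htsetmem (inter_mem hs₅mem hs₆mem))))
  have hb_target : ball (φ 1) ρ ⊆ φ.target := fun z hz => (hρ hz).1
  have hb_src : ball (φ 1) ρ ⊆ ploc.source := fun z hz => (hρ hz).2.1
  have hb_tset : ball (φ 1) ρ ⊆ tset := fun z hz => (hρ hz).2.2.1
  have hb_s₅ : ball (φ 1) ρ ⊆ s₅ := fun z hz => (hρ hz).2.2.2.1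
  have hb_s₆ : ball (φ 1) ρ ⊆ (fun y => φ.symm y * φ.symm y) ⁻¹' φ.source :=
    fun z hz => (hρ hz).2.2.2.2
  have hglip : ∀ z ∈ ball (φ 1) ρ, dist (g z) (φ 1) ≤ 2/3 * dist z (φ 1) := by
    intro z hz
    have h1 : z ∈ tset := hb_tset hz
    have h2 : (φ 1) ∈ tset := hb_tset (mem_ball_self hρpos)
    have := hlip.dist_le_mul z h1 (φ 1) h2
    rw [hgfix] at this
    calc dist (g z) (φ 1) ≤ ((2/3 : ℝ≥0) : ℝ) * dist z (φ 1) := this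
      _ = 2/3 * dist z (φ 1) := by norm_num
  -- W
  set W : Set G := φ.source ∩ φ ⁻¹' (ball (φ 1) ρ) with hWdef
  have hWopen : IsOpen W :=
    (continuousOn_extChartAt (1:G)).isOpen_inter_preimage (isOpen_extChartAt_source (1:G))
      isOpen_ball
  have h1W : (1:G) ∈ W := ⟨h1src, mem_ball_self hρpos⟩
  -- triple product neighborhood
  obtain ⟨O, hOopen, h1O, hOtriple⟩ :
      ∃ O : Set G, IsOpen O ∧ (1:G) ∈ O ∧ ∀ a ∈ O, ∀ b ∈ O, ∀ c ∈ O, a*b*c⁻¹ ∈ W := by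
    have hc1 : Continuous (fun p : G × G × G => p.1) := continuous_fst
    have hc2 : Continuous (fun p : G × G × G => p.2.1) := continuous_fst.comp continuous_snd
    have hc3 : Continuous (fun p : G × G × G => p.2.2) := continuous_snd.comp continuous_snd
    have hcont : Continuous (fun p : G × G × G => p.1 * p.2.1 * p.2.2⁻¹) :=
      (hc1.mul hc2).mul hc3.inv
    have hmem : (fun p : G × G × G => p.1 * p.2.1 * p.2.2⁻¹) ⁻¹' W
        ∈ 𝓝 (((1:G), (1:G), (1:G))) := by
      apply hcont.continuousAt.preimage_mem_nhds
      simpa using hWopen.mem_nhds h1W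
    rw [mem_nhds_prod_iff'] at hmem
    obtain ⟨u, vw, hu, h1u, hvw, h1vw, husub⟩ := hmem
    obtain ⟨v, w, hv, hw, h1v, h1w, hvwsub⟩ := isOpen_prod_iff.mp hvw (1:G) (1:G) h1vw
    refine ⟨u ∩ v ∩ w, (hu.inter hv).inter hw, ⟨⟨h1u, h1v⟩, h1w⟩, ?_⟩
    intro a ha b hb c hc
    have : (a, b, c) ∈ u ×ˢ vw := ⟨ha.1.1, hvwsub ⟨hb.1.2, hc.2⟩⟩
    exact husub this
  have hpreO : φ.symm ⁻¹' O ∈ 𝓝 (φ 1) := by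
    apply hsymm1.preimage_mem_nhds
    rw [hinv1]
    exact hOopen.mem_nhds h1O
  obtain ⟨δ₀, hδ₀pos, hδ₀⟩ := Metric.mem_nhds_iff.mp hpreO
  set δ := min δ₀ ρ with hδdef
  have hδpos : 0 < δ := lt_min hδ₀pos hρpos
  have hδρ : δ ≤ ρ := min_le_right _ _
  set V : Set G := φ.source ∩ φ ⁻¹' (ball (φ 1) δ) with hVdef
  have hVopen : IsOpen V :=
    (continuousOn_extChartAt (1:G)).isOpen_inter_preimage (isOpen_extChartAt_source (1:G))
      isOpen_ball
  have h1V : (1:G) ∈ V := ⟨h1src, mem_ball_self hδpos⟩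
  have hballδρ : ball (φ 1) δ ⊆ ball (φ 1) ρ := ball_subset_ball hδρ
  have hVW : V ⊆ W := fun x hx => ⟨hx.1, hballδρ hx.2⟩
  have hVO : V ⊆ O := by
    intro x hx
    have : φ x ∈ ball (φ 1) δ₀ := ball_subset_ball (min_le_left _ _) hx.2
    have h2 := hδ₀ this
    rwa [mem_preimage, φ.left_inv hx.1] at h2
  set r : G → G := fun x => φ.symm (g (φ x)) with hrdef
  -- main per-point facts
  have hkeyV : ∀ x ∈ V, r x ∈ V ∧ φ (r x) = g (φ x) ∧
      dist (g (φ x)) (φ 1) ≤ 2/3 * dist (φ x) (φ 1) := by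
    intro x hx
    have hx1 : x ∈ φ.source := hx.1
    have hx2 : φ x ∈ ball (φ 1) δ := hx.2
    have hd := hglip (φ x) (hballδρ hx2)
    have hgδ : g (φ x) ∈ ball (φ 1) δ := by
      rw [mem_ball] at hx2 ⊢
      have h23 : 2/3 * dist (φ x) (φ 1) ≤ dist (φ x) (φ 1) := by
        nlinarith [dist_nonneg (x := φ x) (y := φ 1)]
      linarith
    have hgtgt : g (φ x) ∈ φ.target := hb_target (hballδρ hgδ)
    have hrs : r x ∈ φ.source := φ.map_target hgtgt
    have hrval : φ (r x) = g (φ x) := φ.right_inv hgtgt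
    exact ⟨⟨hrs, by rw [mem_preimage, hrval]; exact hgδ⟩, hrval, hd⟩
  have hrV : ∀ x ∈ V, r x ∈ V := fun x hx => (hkeyV x hx).1
  have hsq : ∀ x ∈ V, r x * r x = x := by
    intro x hx
    have hx1 : x ∈ φ.source := hx.1
    have hx2 : φ x ∈ ball (φ 1) δ := hx.2
    have hgδ : g (φ x) ∈ ball (φ 1) δ := by
      have h := (hkeyV x hx).1.2
      rwa [mem_preimage, (hkeyV x hx).2.1] at h
    have hzsrc : φ.symm (g (φ x)) * φ.symm (g (φ x)) ∈ φ.source := hb_s₆ (hballδρ hgδ)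
    have hprod : φ (r x * r x) = φ x := by
      have h5 : f (g (φ x)) = φ x := hs₅ _ (hb_s₅ (hballδρ hx2))
      calc φ (r x * r x) = m (g (φ x), g (φ x)) := rfl
        _ = f (g (φ x)) := rfl
        _ = φ x := h5
    have : r x * r x ∈ φ.source := hzsrc
    exact φ.injOn this hx1 hprod
  have huniq : ∀ x ∈ V, ∀ c ∈ W, c * c = x → c = r x := by
    intro x hx c hc hcc
    have hcs : c ∈ φ.source := hc.1
    have hcb : φ c ∈ ball (φ 1) ρ := hc.2
    have hfc : f (φ c) = φ x := by
      calc f (φ c) = φ (φ.symm (φ c) * φ.symm (φ c)) := rfl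
        _ = φ (c * c) := by rw [φ.left_inv hcs]
        _ = φ x := by rw [hcc]
    have hgδ : g (φ x) ∈ ball (φ 1) δ := by
      have := (hkeyV x hx).1.2
      rwa [mem_preimage, (hkeyV x hx).2.1] at this
    have hfg : f (g (φ x)) = φ x := hs₅ _ (hb_s₅ (hballδρ hx.2))
    have hc_src : φ c ∈ ploc.source := hb_src hcb
    have hg_src : g (φ x) ∈ ploc.source := hb_src (hballδρ hgδ)
    have hploc_coe : ⇑ploc = f := HasStrictFDerivAt.toOpenPartialHomeomorph_coe hfs
    have hinj : φ c = g (φ x) := by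
      apply ploc.injOn hc_src hg_src
      rw [hploc_coe]
      rw [hfc, hfg]
    calc c = φ.symm (φ c) := (φ.left_inv hcs).symm
      _ = φ.symm (g (φ x)) := by rw [hinj]
      _ = r x := rfl
  have hV3 : ∀ a ∈ V, ∀ b ∈ V, ∀ c ∈ V, a * b * c⁻¹ ∈ W := by
    intro a ha b hb c hc
    exact hOtriple a (hVO ha) b (hVO hb) c (hVO hc)
  -- iterates tend to 1
  have hiter : ∀ x ∈ V, ∀ k, r^[k] x ∈ V ∧ dist (φ (r^[k] x)) (φ 1) ≤ (2/3)^k * δ := by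
    intro x hx k
    induction k with
    | zero =>
      refine ⟨hx, ?_⟩
      have : dist (φ x) (φ 1) < δ := mem_ball.mp hx.2
      simpa using this.le
    | succ k ih =>
      obtain ⟨hkV, hkd⟩ := ih
      obtain ⟨hV', hchart, hlipk⟩ := hkeyV _ hkV
      rw [Function.iterate_succ_apply']
      refine ⟨hV', ?_⟩
      rw [show φ (r (r^[k] x)) = g (φ (r^[k] x)) from hchart]
      calc dist (g (φ (r^[k] x))) (φ 1) ≤ 2/3 * dist (φ (r^[k] x)) (φ 1) := hlipk
        _ ≤ 2/3 * ((2/3)^k * δ) := by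
            apply mul_le_mul_of_nonneg_left hkd (by norm_num)
        _ = (2/3)^(k+1) * δ := by ring
  have htend : ∀ x ∈ V, Tendsto (fun k => r^[k] x) atTop (𝓝 (1:G)) := by
    intro x hx
    have hb : Tendsto (fun k => ((2:ℝ)/3)^k * δ) atTop (𝓝 0) := by
      simpa using (tendsto_pow_atTop_nhds_zero_of_lt_one (by norm_num : (0:ℝ) ≤ 2/3)
        (by norm_num : (2:ℝ)/3 < 1)).mul_const δ
    have hd0 : Tendsto (fun k => dist (φ (r^[k] x)) (φ 1)) atTop (𝓝 0) :=
      squeeze_zero (fun k => dist_nonneg) (fun k => (hiter x hx k).2) hb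
    have hφt : Tendsto (fun k => φ (r^[k] x)) atTop (𝓝 (φ 1)) :=
      tendsto_iff_dist_tendsto_zero.mpr hd0
    have hcomp : Tendsto (fun k => φ.symm (φ (r^[k] x))) atTop (𝓝 (φ.symm (φ 1))) :=
      hsymm1.tendsto.comp hφt
    rw [hinv1] at hcomp
    refine Tendsto.congr ?_ hcomp
    intro k
    exact φ.left_inv (hiter x hx k).1.1
  exact ⟨W, V, r, hVopen, h1V, hrV, hsq, huniq, hV3, htend⟩

/-- Let `G` be a compact Lie group. There exists a constant `C` such that for every finite
abelian subgroup `A ≤ G` there is a torus `T ≤ G` (a closed connected commutative subgroup)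
with `[A : A ∩ T] ≤ C`. -/
theorem compact_lie_group_finite_abelian_almost_in_torus {n : ℕ} (G : Type*) [Group G]
    [TopologicalSpace G] [IsTopologicalGroup G] [CompactSpace G]
    [ChartedSpace (EuclideanSpace ℝ (Fin n)) G] [LieGroup (𝓡 n) (⊤ : ℕ∞) G] :
    ∃ C : ℕ, ∀ A : Subgroup G, Finite A → (∀ x ∈ A, ∀ y ∈ A, x * y = y * x) →
      ∃ T : Subgroup G, IsClosed (T : Set G) ∧ IsConnected (T : Set G) ∧
        (∀ x ∈ T, ∀ y ∈ T, x * y = y * x) ∧ T.relIndex A ≤ C := by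
  classical
  haveI : T2Space G := myT2 (n := n) G
  obtain ⟨W, V, r, hVopen, h1V, hrV, hsq, huniq, hV3, htend⟩ := exists_good_sqrt (n := n) G
  -- a small symmetric-ish neighborhood for the covering argument
  obtain ⟨O₂, hO₂open, h1O₂, hO₂⟩ : ∃ O₂ : Set G, IsOpen O₂ ∧ (1:G) ∈ O₂ ∧
      ∀ s ∈ O₂, ∀ u ∈ O₂, s⁻¹ * u ∈ V := by
    have hcont : Continuous (fun p : G × G => p.1⁻¹ * p.2) :=
      continuous_fst.inv.mul continuous_snd
    have hmem : (fun p : G × G => p.1⁻¹ * p.2) ⁻¹' V ∈ 𝓝 ((1:G), (1:G)) := by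
      apply hcont.continuousAt.preimage_mem_nhds
      simpa using hVopen.mem_nhds h1V
    rw [mem_nhds_prod_iff'] at hmem
    obtain ⟨u, v, hu, h1u, hv, h1v, hsub⟩ := hmem
    refine ⟨u ∩ v, hu.inter hv, ⟨h1u, h1v⟩, fun s hs w hw => ?_⟩
    have hm : (s, w) ∈ u ×ˢ v := ⟨hs.1, hw.2⟩
    exact hsub hm
  -- finite cover of G by translates of O₂
  obtain ⟨t, ht⟩ := IsCompact.elim_finite_subcover (isCompact_univ (X := G))
    (fun x : G => (fun y => x⁻¹ * y) ⁻¹' O₂)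
    (fun x => hO₂open.preimage (continuous_const.mul continuous_id))
    (by intro y _; exact Set.mem_iUnion.mpr ⟨y, by simp [h1O₂]⟩)
  refine ⟨t.card, ?_⟩
  intro A _hfin hA
  -- iterated square roots of elements of A near 1 generate the torus
  set Sgen : Set G := {y | ∃ a, (a ∈ (A : Set G) ∩ V) ∧ ∃ m : ℕ, y = r^[m] a} with hSdef
  have hiterV : ∀ a ∈ V, ∀ k : ℕ, r^[k] a ∈ V := by
    intro a ha k
    induction k with
    | zero => simpa using ha
    | succ k ih => rw [Function.iterate_succ_apply']; exact hrV _ ih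
  -- commuting with square roots
  have hstep : ∀ x ∈ V, ∀ y ∈ V, x * y = y * x → x * r y = r y * x := by
    intro x hx y hy hxy
    have hcW : x * r y * x⁻¹ ∈ W := hV3 x hx (r y) (hrV y hy) x hx
    have hsq2 : (x * r y * x⁻¹) * (x * r y * x⁻¹) = y := by
      have e1 : (x * r y * x⁻¹) * (x * r y * x⁻¹) = x * (r y * r y) * x⁻¹ := by group
      rw [e1, hsq y hy, hxy, mul_assoc]
      simp
    have h := huniq y hy _ hcW hsq2
    calc x * r y = x * r y * x⁻¹ * x := by group
      _ = r y * x := by rw [h]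
  have hcomm1 : ∀ x ∈ V, ∀ y ∈ V, x * y = y * x → ∀ k : ℕ,
      x * r^[k] y = r^[k] y * x := by
    intro x hx y hy hxy k
    induction k with
    | zero => simpa using hxy
    | succ k ih =>
      rw [Function.iterate_succ_apply']
      exact hstep x hx (r^[k] y) (hiterV y hy k) ih
  have hcommgen : ∀ a ∈ V, ∀ b ∈ V, a * b = b * a → ∀ mm k : ℕ,
      r^[mm] a * r^[k] b = r^[k] b * r^[mm] a := by
    intro a ha b hb hab mm k
    have h1 : b * r^[mm] a = r^[mm] a * b := hcomm1 b hb a ha hab.symm mm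
    exact hcomm1 (r^[mm] a) (hiterV a ha mm) b hb h1.symm k
  have hSgencomm : ∀ x ∈ Sgen, ∀ y ∈ Sgen, x * y = y * x := by
    rintro x ⟨a, ha, mm, rfl⟩ y ⟨b, hb, k, rfl⟩
    exact hcommgen a ha.2 b hb.2 (hA a ha.1 b hb.1) mm k
  set H : Subgroup G := Subgroup.closure Sgen with hHdef
  set T : Subgroup G := H.topologicalClosure with hTdef
  have hTclosed : IsClosed (T : Set G) := Subgroup.isClosed_topologicalClosure H
  -- commutativity of H
  have Hcomm : ∀ x ∈ H, ∀ y ∈ H, x * y = y * x := by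
    have h1 : H ≤ Subgroup.centralizer Sgen := by
      rw [hHdef, Subgroup.closure_le]
      intro x hx
      rw [SetLike.mem_coe, Subgroup.mem_centralizer_iff]
      intro g hg
      exact hSgencomm g hg x hx
    have h2 : H ≤ Subgroup.centralizer (H : Set G) := by
      conv_lhs => rw [hHdef]
      rw [Subgroup.closure_le]
      intro x hx
      rw [SetLike.mem_coe, Subgroup.mem_centralizer_iff]
      intro g hg
      have h3 := h1 hg
      rw [Subgroup.mem_centralizer_iff] at h3
      exact (h3 x hx).symm
    intro x hx y hy
    have h4 := h2 hy
    rw [Subgroup.mem_centralizer_iff] at h4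
    exact h4 x hx
  -- commutativity of T
  have hTcoe : (T : Set G) = closure (H : Set G) := rfl
  have Tcomm : ∀ x ∈ T, ∀ y ∈ T, x * y = y * x := by
    have step1 : ∀ y ∈ (H : Set G), ∀ x ∈ closure (H : Set G), x * y = y * x := by
      intro y hy x hx
      have hcl : IsClosed {x : G | x * y = y * x} :=
        isClosed_eq (continuous_mul_right y) (continuous_mul_left y)
      exact closure_minimal (fun z hz => Hcomm z hz y hy) hcl hx
    intro x hx y hy
    have hx' : x ∈ closure (H : Set G) := by rw [← hTcoe]; exact hx
    have hy' : y ∈ closure (H : Set G) := by rw [← hTcoe]; exact hy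
    have hcl : IsClosed {y : G | x * y = y * x} :=
      isClosed_eq (continuous_mul_left x) (continuous_mul_right x)
    exact closure_minimal (fun z hz => step1 z hz x hx') hcl hy'
  -- A ∩ V sits inside T
  have hSgenH : Sgen ⊆ (H : Set G) := Subgroup.subset_closure
  have hHT : H ≤ T := Subgroup.le_topologicalClosure H
  have hAVT : (A : Set G) ∩ V ⊆ (T : Set G) := by
    intro a ha
    exact hHT (hSgenH ⟨a, ha, 0, rfl⟩)
  -- iterated square root powers
  have hpowiter : ∀ a ∈ V, ∀ mm d : ℕ, r^[mm] a = (r^[mm+d] a) ^ (2^d) := by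
    intro a ha mm d
    induction d with
    | zero => simp
    | succ d ih =>
      rw [ih]
      have h1 : r^[mm+d] a = (r^[mm+d+1] a) ^ 2 := by
        have h2 : r (r^[mm+d] a) * r (r^[mm+d] a) = r^[mm+d] a :=
          hsq _ (hiterV a ha (mm+d))
        rw [pow_two, Function.iterate_succ_apply' r]
        exact h2.symm
      rw [h1, ← pow_mul, show 2 * 2^d = 2^(d+1) by ring]
      rfl
  -- connectedness of T
  haveI hTcpt : CompactSpace ↥T := isCompact_iff_compactSpace.mp hTclosed.isCompact
  have hcc : ∀ z : ↥T, z ∈ connectedComponent (1 : ↥T) := by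
    intro z
    rw [connectedComponent_eq_iInter_isClopen]
    refine Set.mem_iInter.2 ?_
    rintro ⟨K, hKclopen, h1K⟩
    obtain ⟨U, hUK⟩ :=
      IsTopologicalGroup.exist_openSubgroup_sub_clopen_nhds_of_one hKclopen h1K
    obtain ⟨Θ, hΘopen, hΘpre⟩ := isOpen_induced_iff.mp U.isOpen
    have h1Θ : (1:G) ∈ Θ := by
      have h5 : (1 : ↥T) ∈ (U : Set ↥T) := U.one_mem
      rw [← hΘpre] at h5
      exact h5
    set UG : Subgroup G := Subgroup.map T.subtype U.toSubgroup with hUGdef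
    have hSgenUG : Sgen ⊆ (UG : Set G) := by
      rintro y ⟨a, ha, mm, rfl⟩
      have haV : a ∈ V := ha.2
      have hmemT : ∀ k : ℕ, r^[k] a ∈ T := fun k => hHT (hSgenH ⟨a, ha, k, rfl⟩)
      have hev : ∀ᶠ j in Filter.atTop, r^[j] a ∈ Θ :=
        (htend a haV).eventually (hΘopen.mem_nhds h1Θ)
      obtain ⟨M, hM⟩ := Filter.eventually_atTop.mp hev
      set j := max mm M with hjdef
      have hjΘ : r^[j] a ∈ Θ := hM j (le_max_right _ _)
      have hjU : (⟨r^[j] a, hmemT j⟩ : ↥T) ∈ U.toSubgroup := by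
        have : (⟨r^[j] a, hmemT j⟩ : ↥T) ∈ (Subtype.val) ⁻¹' Θ := hjΘ
        rw [hΘpre] at this
        exact this
      have hpow : r^[mm] a = (r^[j] a) ^ (2 ^ (j - mm)) := by
        have h6 := hpowiter a haV mm (j - mm)
        rwa [Nat.add_sub_cancel' (le_max_left mm M)] at h6
      refine ⟨(⟨r^[j] a, hmemT j⟩ : ↥T) ^ (2^(j-mm)), pow_mem hjU _, ?_⟩
      rw [hpow]
      rfl
    have hHUG : H ≤ UG := by
      rw [hHdef, Subgroup.closure_le]
      exact hSgenUG
    have hUGclosed : IsClosed (UG : Set G) := by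
      have hUcl : IsClosed (U : Set ↥T) := OpenSubgroup.isClosed U
      have hUcpt : IsCompact (U : Set ↥T) := hUcl.isCompact
      have himg : (UG : Set G) = Subtype.val '' (U : Set ↥T) := by
        ext x
        simp only [hUGdef, Subgroup.coe_map, Subgroup.coe_subtype]
        rfl
      rw [himg]
      exact (hUcpt.image continuous_subtype_val).isClosed
    have hTUG : T ≤ UG := Subgroup.topologicalClosure_minimal H hHUG hUGclosed
    have hz : (z : G) ∈ UG := hTUG z.2
    obtain ⟨u, huU, hu⟩ := hz
    have huz : u = z := Subtype.ext hu
    rw [← huz]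
    exact hUK huU
  have hccuniv : connectedComponent (1 : ↥T) = Set.univ := Set.eq_univ_of_forall hcc
  haveI hTconnsp : ConnectedSpace ↥T :=
    connectedSpace_iff_connectedComponent.mpr ⟨1, hccuniv⟩
  have hconn : IsConnected (T : Set G) := by
    have h7 := isConnected_range (continuous_subtype_val (p := fun x => x ∈ T))
    rwa [Subtype.range_coe_subtype] at h7
  -- the index bound
  have hcov : ∀ y : G, ∃ x : t, (x : G)⁻¹ * y ∈ O₂ := by
    intro y
    have h8 := ht (Set.mem_univ y)
    rw [Set.mem_iUnion₂] at h8
    obtain ⟨x, hxt, hx⟩ := h8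
    exact ⟨⟨x, hxt⟩, hx⟩
  choose idx hidx using hcov
  have hle : T.relIndex A ≤ t.card := by
    have hFinj : Function.Injective
        (fun q : ↥A ⧸ T.subgroupOf A => idx ((Quotient.out q : ↥A) : G)) := by
      intro q1 q2 hq
      set a : ↥A := Quotient.out q1 with hadef
      set b : ↥A := Quotient.out q2 with hbdef
      have h1 := hidx (a : G)
      have h2 := hidx (b : G)
      have hq' : idx ((a : ↥A) : G) = idx ((b : ↥A) : G) := hq
      rw [← hq'] at h2
      have h9 : ((idx (a:G) : G)⁻¹ * (a:G))⁻¹ * ((idx (a:G) : G)⁻¹ * (b:G))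
          ∈ V := hO₂ _ h1 _ h2
      have h10 : ((idx (a:G) : G)⁻¹ * (a:G))⁻¹ * ((idx (a:G) : G)⁻¹ * (b:G))
          = (a:G)⁻¹ * (b:G) := by group
      rw [h10] at h9
      have hmemA : (a⁻¹ * b : ↥A) = ⟨(a:G)⁻¹ * (b:G), mul_mem (inv_mem a.2) b.2⟩ := rfl
      have hT9 : (a:G)⁻¹ * (b:G) ∈ T :=
        hAVT ⟨mul_mem (inv_mem a.2) b.2, h9⟩
      have hsub : a⁻¹ * b ∈ T.subgroupOf A := by
        rw [Subgroup.mem_subgroupOf]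
        exact hT9
      have h12 := QuotientGroup.eq.mpr hsub
      rwa [hadef, hbdef, QuotientGroup.out_eq', QuotientGroup.out_eq'] at h12
    have hcard := Nat.card_le_card_of_injective _ hFinj
    have hc2 : Nat.card ↥t = t.card := by
      simp [Nat.card_eq_fintype_card]
    calc T.relIndex A = Nat.card (↥A ⧸ T.subgroupOf A) := rfl
      _ ≤ Nat.card ↥t := hcard
      _ = t.card := hc2
  exact ⟨T, hTclosed, hconn, Tcomm, hle⟩
end

section
/- (Minkowski) Fix a natural number k ≥ 1. The componentwise reduction modulo 3 homomorphism GL(k, ℤ) → GL(k, ℤ/3ℤ) is injective on every finite subgroup of GL(k, ℤ); consequently, every finite subgroup G ≤ GL(k, ℤ) satisfies |G| ≤ 3^{k²}. -/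
namespace MinkowskiAux
variable {k : ℕ}
local notation "R" => Matrix (Fin k) (Fin k) ℤ

theorem cast_mul_eq_smul (c : ℤ) (X : R) : (c : R) * X = c • X := by
  rw [← Matrix.diagonal_intCast (n := Fin k) (α := ℤ) c]
  ext i j
  rw [Matrix.diagonal_mul]
  simp

theorem dvd_iff_entries (c : ℤ) (X : R) : (c : R) ∣ X ↔ ∀ i j, c ∣ X i j := by
  constructor
  · rintro ⟨Y, rfl⟩ i j
    rw [cast_mul_eq_smul]
    exact ⟨Y i j, rfl⟩
  · intro h
    refine ⟨Matrix.of fun i j => X i j / c, ?_⟩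
    rw [cast_mul_eq_smul]
    ext i j
    simpa using (Int.mul_ediv_cancel' (h i j)).symm

theorem smul_cancel (c : ℤ) (hc : c ≠ 0) (X : R) (h : c • X = 0) : X = 0 := by
  rcases smul_eq_zero.mp h with h | h
  · exact absurd h hc
  · exact h

theorem pow_sub_one_dvd (c : ℤ) (A : R) (h : (c : R) ∣ A - 1) (j : ℕ) :
    (c : R) ∣ A ^ j - 1 := by
  obtain ⟨B, hB⟩ := h
  induction j with
  | zero => simp
  | succ n ih =>
      have e : A ^ (n + 1) - 1 = A ^ n * (A - 1) + (A ^ n - 1) := by noncomm_ring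
      rw [e, hB]
      refine dvd_add ⟨A ^ n * B, ?_⟩ ih
      rw [cast_mul_eq_smul, cast_mul_eq_smul, mul_smul_comm]

theorem step3 (p s : ℕ) (hp : p.Prime) (A : R) (hA : A ^ p = 1)
    (h : (((3:ℤ) ^ (s+1) : ℤ) : R) ∣ A - 1) : (((3:ℤ) ^ (s+2) : ℤ) : R) ∣ A - 1 := by
  obtain ⟨B, hB⟩ := h
  rw [cast_mul_eq_smul] at hB
  -- it suffices to show 3 ∣ B entrywise
  suffices h3 : ∃ E : R, B = (3:ℤ) • E by
    obtain ⟨E, rfl⟩ := h3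
    refine ⟨E, ?_⟩
    rw [cast_mul_eq_smul, hB, smul_smul]
    match_scalars
    ring
  by_cases hp3 : p = 3
  · -- p = 3 case
    subst hp3
    have hA' : A = 1 + (3:ℤ)^(s+1) • B := by rw [← hB]; abel
    have expand : (0:R) = ((3:ℤ)^(s+2)) •
        (B + ((3:ℤ)^(s+1)) • (B*(B)) + ((3:ℤ)^(2*s+1)) • (B*(B*B))) := by
      calc (0:R) = A ^ 3 - 1 := by rw [hA]; simp
        _ = _ := by
            rw [hA', pow_succ, pow_succ, pow_one]
            simp only [mul_add, add_mul, one_mul, mul_one, smul_mul_assoc, mul_smul_comm,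
              smul_smul, mul_assoc, smul_add, smul_neg, smul_sub]
            match_scalars <;> ring
    have hD := smul_cancel _ (by positivity) _ expand.symm
    rw [add_assoc] at hD
    have hBeq := eq_neg_of_add_eq_zero_left hD
    refine ⟨-(((3:ℤ)^s) • (B*B) + ((3:ℤ)^(2*s)) • (B*(B*B))), ?_⟩
    conv_lhs => rw [hBeq]
    simp only [neg_add, smul_add, smul_neg, smul_smul, ← neg_smul]
    match_scalars <;> ring
  · -- p ≠ 3
    have hgeom : (∑ i ∈ Finset.range p, A ^ i) * (A - 1) = 0 := by
      rw [geom_sum_mul, hA, sub_self]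
    have hsum : ∃ T : R, (∑ i ∈ Finset.range p, A ^ i) = (p:ℤ) • 1 + (3:ℤ)^(s+1) • T := by
      have hdvd : ∀ i, ((((3:ℤ)^(s+1) : ℤ)) : R) ∣ A ^ i - 1 :=
        pow_sub_one_dvd _ A ⟨B, by rw [cast_mul_eq_smul, hB]⟩
      have hd2 : ((((3:ℤ)^(s+1) : ℤ)) : R) ∣ (∑ i ∈ Finset.range p, A ^ i) - (p:ℤ) • 1 := by
        have e : (∑ i ∈ Finset.range p, A ^ i) - (p:ℤ) • 1
            = ∑ i ∈ Finset.range p, (A ^ i - 1) := by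
          simp [Finset.sum_sub_distrib]
        rw [e]
        exact Finset.dvd_sum fun i _ => hdvd i
      obtain ⟨T, hT⟩ := hd2
      rw [cast_mul_eq_smul] at hT
      exact ⟨T, by rw [← hT]; abel⟩
    obtain ⟨T, hT⟩ := hsum
    rw [hT, hB] at hgeom
    have key : ((3:ℤ)^(s+1)) • ((p:ℤ) • B + ((3:ℤ)^(s+1)) • (T * B)) = 0 := by
      rw [← hgeom]
      simp only [add_mul, smul_mul_assoc, mul_smul_comm, smul_smul, one_mul, smul_add]
    have hD := smul_cancel _ (by positivity) _ key
    have h3B : ∀ i j, (3:ℤ) ∣ B i j := by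
      intro i j
      have hentry := congrFun (congrFun hD i) j
      simp only [Matrix.add_apply, Matrix.smul_apply, smul_eq_mul, Matrix.zero_apply] at hentry
      have h1 : (3:ℤ) ∣ (p:ℤ) * B i j := by
        refine ⟨-((3:ℤ)^s * (T*B) i j), ?_⟩
        linear_combination hentry
      have hnot : ¬ ((3:ℤ) ∣ (p:ℤ)) := by
        intro hd
        have h4 : (3:ℕ) ∣ p := by exact_mod_cast hd
        rcases (Nat.Prime.eq_one_or_self_of_dvd hp 3 h4) with h | h
        · omega
        · exact hp3 h.symm
      rcases (Int.Prime.dvd_mul' (by norm_num) h1) with h | h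
      · exact absurd h hnot
      · exact h
    obtain ⟨E, hE⟩ := (dvd_iff_entries 3 B).mpr h3B
    rw [cast_mul_eq_smul] at hE
    exact ⟨E, hE⟩

theorem eq_one_of_pow (n : ℕ) : 0 < n → ∀ A : Matrix (Fin k) (Fin k) ℤ, A ^ n = 1 →
    (((3:ℤ)):R) ∣ A - 1 → A = 1 := by
  induction n using Nat.strong_induction_on with
  | _ n ih =>
    intro hn A hA h3
    rcases eq_or_lt_of_le (Nat.succ_le_of_lt hn) with h1 | h1
    · rw [← pow_one A, show 1 = n from h1, hA]  -- n = 1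
    · set p := n.minFac with hp'
      have hp : p.Prime := Nat.minFac_prime (by omega)
      set m := n / p with hm'
      have hmp : m * p = n := Nat.div_mul_cancel (Nat.minFac_dvd n)
      have hA'pow : (A ^ m) ^ p = 1 := by rw [← pow_mul, hmp, hA]
      have h3' : (((3:ℤ)):R) ∣ A ^ m - 1 := pow_sub_one_dvd 3 A h3 m
      have iter : ∀ s : ℕ, ((((3:ℤ) ^ (s+1)):ℤ):R) ∣ A ^ m - 1 := by
        intro s
        induction s with
        | zero => simpa using h3'
        | succ t iht => exact step3 p t hp (A ^ m) hA'pow iht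
      have hAm : A ^ m = 1 := by
        have hz : A ^ m - 1 = 0 := by
          ext i j
          have hd : ∀ s : ℕ, (3:ℤ) ^ (s+1) ∣ (A ^ m - 1) i j := fun s =>
            (dvd_iff_entries _ _).mp (iter s) i j
          set x : ℤ := (A ^ m - 1) i j with hx
          by_contra hne
          have hxne : x ≠ 0 := by simpa using hne
          have hle : (3:ℤ) ^ (x.natAbs + 1) ≤ |x| := Int.le_of_dvd (abs_pos.mpr hxne) ((dvd_abs _ _).mpr (hd _))
          have hlt : (x.natAbs : ℤ) < (3:ℤ) ^ (x.natAbs + 1) := by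
            have h5 : x.natAbs < 3 ^ (x.natAbs + 1) :=
              lt_of_lt_of_le (Nat.lt_pow_self (by norm_num))
                (Nat.pow_le_pow_right (by norm_num) (Nat.le_succ _))
            exact_mod_cast h5
          rw [Int.abs_eq_natAbs] at hle
          omega
        have := sub_eq_zero.mp hz
        exact this
      have hmlt : m < n := Nat.div_lt_self (by omega) (Nat.Prime.one_lt hp)
      have hmpos : 0 < m := Nat.div_pos (Nat.minFac_le (by omega)) (Nat.minFac_pos n)
      exact ih m hmlt hmpos A hAm h3

end MinkowskiAux

open MinkowskiAux in
/-- (Minkowski) For `k ≥ 1`, the entrywise reduction mod `3` homomorphism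
`GL(k, ℤ) → GL(k, ℤ/3ℤ)` is injective on every finite subgroup of `GL(k, ℤ)`; consequently
every finite subgroup `G ≤ GL(k, ℤ)` satisfies `|G| ≤ 3 ^ (k²)`. -/
theorem minkowski_lemma (k : ℕ) (hk : 1 ≤ k)
    (G : Subgroup (Matrix.GeneralLinearGroup (Fin k) ℤ)) (hG : Finite G) :
    Set.InjOn (Units.map (RingHom.mapMatrix (Int.castRingHom (ZMod 3))).toMonoidHom)
        (G : Set (Matrix.GeneralLinearGroup (Fin k) ℤ)) ∧
      Nat.card G ≤ 3 ^ (k ^ 2) := by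
  let f : Matrix.GeneralLinearGroup (Fin k) ℤ →* Matrix.GeneralLinearGroup (Fin k) (ZMod 3) :=
    Units.map (RingHom.mapMatrix (Int.castRingHom (ZMod 3))).toMonoidHom
  have hker : ∀ z : Matrix.GeneralLinearGroup (Fin k) ℤ, z ∈ G → f z = 1 → z = 1 := by
    intro z hz h1
    have h3 : (((3:ℤ)) : Matrix (Fin k) (Fin k) ℤ) ∣ (z.val - 1) := by
      rw [dvd_iff_entries]
      intro i j
      have hm : (RingHom.mapMatrix (Int.castRingHom (ZMod 3))) z.val = 1 := congrArg Units.val h1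
      have h2 := congrFun (congrFun hm i) j
      simp only [RingHom.mapMatrix_apply, Matrix.map_apply, Int.coe_castRingHom] at h2
      have h4 : ((z.val i j : ℤ) : ZMod 3) = (((1 : Matrix (Fin k) (Fin k) ℤ) i j : ℤ) : ZMod 3) := by
        rw [h2]
        by_cases hij : i = j <;> simp [hij, Matrix.one_apply]
      have h5 := (ZMod.intCast_eq_intCast_iff _ _ _).mp h4
      have h6 := (Int.ModEq.dvd h5.symm)
      simpa [Matrix.sub_apply] using h6
    have hn : z.val ^ (Nat.card G) = 1 := by
      have hc : (⟨z, hz⟩ : G) ^ (Nat.card G) = 1 := pow_card_eq_one'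
      have h2 : z ^ (Nat.card G) = 1 := by
        have h7 := congrArg (Subtype.val) hc
        rw [SubmonoidClass.coe_pow] at h7
        exact h7
      have h4 := congrArg Units.val h2
      rw [Units.val_pow_eq_pow_val] at h4
      simpa using h4
    have hpos : 0 < Nat.card G := Nat.card_pos
    exact Units.ext (eq_one_of_pow (Nat.card G) hpos z.val hn h3)
  have hinj : Set.InjOn f (G : Set (Matrix.GeneralLinearGroup (Fin k) ℤ)) := by
    intro x hx y hy hxy
    have hzmem : x * y⁻¹ ∈ G := mul_mem hx (inv_mem hy)
    have h1 : f (x * y⁻¹) = 1 := by rw [map_mul, map_inv, hxy, mul_inv_cancel]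
    exact mul_inv_eq_one.mp (hker _ hzmem h1)
  refine ⟨hinj, ?_⟩
  have e1 : Nat.card G = Nat.card (f '' (G : Set _)) := (Nat.card_image_of_injOn hinj).symm
  rw [e1]
  have e2 : Nat.card (f '' (G : Set _)) ≤ Nat.card (Matrix.GeneralLinearGroup (Fin k) (ZMod 3)) :=
    Nat.card_le_card_of_injective _ Subtype.val_injective
  have e3 : Nat.card (Matrix.GeneralLinearGroup (Fin k) (ZMod 3))
      ≤ Nat.card (Matrix (Fin k) (Fin k) (ZMod 3)) :=
    Nat.card_le_card_of_injective _ Units.val_injective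
  have e4 : Nat.card (Matrix (Fin k) (Fin k) (ZMod 3)) = 3 ^ (k ^ 2) := by
    simp only [Nat.card_eq_fintype_card]
    rw [Fintype.card_congr (Matrix.of (m := Fin k) (n := Fin k) (α := ZMod 3)).symm]
    simp [pow_two, pow_mul]
  omega
end

section
/- Let X be a connected smooth manifold (without boundary), let G be a finite group acting smoothly and effectively on X via an injective group homomorphism ρ : G → Diff(X), and let x ∈ X be a point fixed by every element of G. Then the group homomorphism G → GL(T_xX) sending each g ∈ G to the differential at x of the diffeomorphism ρ(g) is injective. -/
open scoped Manifold

/-- The group of self-homeomorphisms of a topological space, with `(f * g) x = f (g x)`. -/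
instance homeoGroup (X : Type*) [TopologicalSpace X] : Group (X ≃ₜ X) where
  mul f g := g.trans f
  one := Homeomorph.refl X
  inv := Homeomorph.symm
  mul_assoc _ _ _ := Homeomorph.ext fun _ => rfl
  one_mul _ := Homeomorph.ext fun _ => rfl
  mul_one _ := Homeomorph.ext fun _ => rfl
  inv_mul_cancel := Homeomorph.self_trans_symm

open Set Filter Topology Function

set_option linter.unusedSectionVars false

section Aux
variable {n : ℕ} {X : Type*} [TopologicalSpace X] [T2Space X]
  [ChartedSpace (EuclideanSpace ℝ (Fin n)) X] [IsManifold (𝓡 n) ((⊤ : ℕ∞) : WithTop ℕ∞) X]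

noncomputable def chartRep (y : X) (f : X → X) :
    EuclideanSpace ℝ (Fin n) → EuclideanSpace ℝ (Fin n) :=
  fun z => extChartAt (𝓡 n) y (f ((extChartAt (𝓡 n) y).symm z))

lemma one_le_top_enat : (1 : WithTop ℕ∞) ≤ ((⊤ : ℕ∞) : WithTop ℕ∞) := by
  exact_mod_cast le_top

lemma contDiffAt_chartRep {f : X → X} {y : X} (hf : ContMDiffAt (𝓡 n) (𝓡 n) (⊤ : ℕ∞) f y)
    (hfy : f y = y) :
    ContDiffAt ℝ ((⊤ : ℕ∞) : WithTop ℕ∞) (chartRep y f) (extChartAt (𝓡 n) y y) := by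
  have h := (contMDiffAt_iff.mp hf).2
  rw [hfy, (𝓡 n).range_eq_univ, contDiffWithinAt_univ] at h
  exact h

lemma mfderiv_eq_fderiv_chartRep {f : X → X} {y : X} (hf : ContMDiffAt (𝓡 n) (𝓡 n) (⊤ : ℕ∞) f y)
    (hfy : f y = y) :
    (mfderiv (𝓡 n) (𝓡 n) f y : TangentSpace (𝓡 n) y →L[ℝ] TangentSpace (𝓡 n) y) =
      fderiv ℝ (chartRep y f) (extChartAt (𝓡 n) y y) := by
  have hd : MDifferentiableAt (𝓡 n) (𝓡 n) f y := hf.mdifferentiableAt (by simp)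
  rw [hd.mfderiv, (𝓡 n).range_eq_univ, fderivWithin_univ]
  congr 1
  funext z
  simp [writtenInExtChartAt, chartRep, hfy]


lemma eventually_chartRep_comp {f g : X → X} {y : X} (hfc : ContinuousAt f y)
    (hfy : f y = y) :
    ∀ᶠ z in 𝓝 (extChartAt (𝓡 n) y y),
      chartRep y (g ∘ f) z = chartRep y g (chartRep y f z) := by
  rw [← map_extChartAt_nhds_of_boundaryless (I := 𝓡 n) y, eventually_map]
  have h1 : ∀ᶠ w in 𝓝 y, w ∈ (extChartAt (𝓡 n) y).source := extChartAt_source_mem_nhds y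
  have h2 : ∀ᶠ w in 𝓝 y, f w ∈ (extChartAt (𝓡 n) y).source :=
    hfc.preimage_mem_nhds (by rw [hfy]; exact extChartAt_source_mem_nhds y)
  filter_upwards [h1, h2] with w hw1 hw2
  simp only [chartRep, comp_apply, (extChartAt (𝓡 n) y).left_inv hw1,
    (extChartAt (𝓡 n) y).left_inv hw2]

lemma eventually_chartRep_id {y : X} :
    ∀ᶠ z in 𝓝 (extChartAt (𝓡 n) y y), chartRep y id z = z := by
  rw [← map_extChartAt_nhds_of_boundaryless (I := 𝓡 n) y, eventually_map]
  filter_upwards [extChartAt_source_mem_nhds (I := 𝓡 n) y] with w hw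
  simp only [chartRep, id_eq, (extChartAt (𝓡 n) y).left_inv hw]

lemma chartRep_fixed {f : X → X} {y : X} (hfy : f y = y) :
    chartRep y f (extChartAt (𝓡 n) y y) = extChartAt (𝓡 n) y y := by
  simp [chartRep, (extChartAt (𝓡 n) y).left_inv (mem_extChartAt_source y), hfy]

lemma contMDiff_iterate {f : X → X} (hf : ContMDiff (𝓡 n) (𝓡 n) (⊤ : ℕ∞) f) (i : ℕ) :
    ContMDiff (𝓡 n) (𝓡 n) (⊤ : ℕ∞) f^[i] := by
  induction i with
  | zero => exact contMDiff_id
  | succ i ih => rw [iterate_succ]; exact ih.comp hf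


lemma fderiv_chartRep_iterate {f : X → X} {y : X} (hf : ContMDiff (𝓡 n) (𝓡 n) (⊤ : ℕ∞) f)
    (hfy : f y = y)
    (hD : fderiv ℝ (chartRep y f) (extChartAt (𝓡 n) y y) =
      ContinuousLinearMap.id ℝ (EuclideanSpace ℝ (Fin n))) (i : ℕ) :
    fderiv ℝ (chartRep y f^[i]) (extChartAt (𝓡 n) y y) =
      ContinuousLinearMap.id ℝ (EuclideanSpace ℝ (Fin n)) := by
  induction i with
  | zero =>
    have h : chartRep y f^[0] =ᶠ[𝓝 (extChartAt (𝓡 n) y y)] id := eventually_chartRep_id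
    rw [h.fderiv_eq, fderiv_id]
  | succ i ih =>
    have hcomp : chartRep y f^[i + 1] =ᶠ[𝓝 (extChartAt (𝓡 n) y y)]
        (chartRep y f^[i] ∘ chartRep y f) := by
      rw [iterate_succ]
      exact eventually_chartRep_comp hf.continuous.continuousAt hfy
    have hpt : chartRep y f (extChartAt (𝓡 n) y y) = extChartAt (𝓡 n) y y :=
      chartRep_fixed hfy
    have hdf : DifferentiableAt ℝ (chartRep y f) (extChartAt (𝓡 n) y y) :=
      (contDiffAt_chartRep hf.contMDiffAt hfy).differentiableAt (by simp)
    have hdfi : DifferentiableAt ℝ (chartRep y f^[i])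
        (chartRep y f (extChartAt (𝓡 n) y y)) := by
      rw [hpt]
      exact (contDiffAt_chartRep (contMDiff_iterate hf i).contMDiffAt
        (iterate_fixed hfy i)).differentiableAt (by simp)
    rw [hcomp.fderiv_eq, fderiv_comp _ hdfi hdf, hpt, ih, hD]
    simp

lemma bochner {f : X → X} {y : X} {k : ℕ} (hf : ContMDiff (𝓡 n) (𝓡 n) (⊤ : ℕ∞) f)
    (hfy : f y = y) (hk : 0 < k) (hper : ∀ w, f^[k] w = w)
    (hD : fderiv ℝ (chartRep y f) (extChartAt (𝓡 n) y y) =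
      ContinuousLinearMap.id ℝ (EuclideanSpace ℝ (Fin n))) :
    ∀ᶠ w in 𝓝 y, f w = w := by
  set x₀ := extChartAt (𝓡 n) y y with hx₀
  set a : ℕ → EuclideanSpace ℝ (Fin n) → EuclideanSpace ℝ (Fin n) :=
    fun i => chartRep y f^[i] with ha
  set H : EuclideanSpace ℝ (Fin n) → EuclideanSpace ℝ (Fin n) :=
    fun z => (k : ℝ)⁻¹ • ∑ i ∈ Finset.range k, a i z with hHdef
  have hsm : ∀ i, ContDiffAt ℝ ((⊤ : ℕ∞) : WithTop ℕ∞) (a i) x₀ := fun i =>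
    contDiffAt_chartRep (contMDiff_iterate hf i).contMDiffAt (iterate_fixed hfy i)
  have hda : ∀ i, DifferentiableAt ℝ (a i) x₀ := fun i =>
    (hsm i).differentiableAt (by simp)
  have hfd : ∀ i, fderiv ℝ (a i) x₀ = ContinuousLinearMap.id ℝ (EuclideanSpace ℝ (Fin n)) :=
    fderiv_chartRep_iterate hf hfy hD
  have hk' : (k : ℝ) ≠ 0 := Nat.cast_ne_zero.mpr hk.ne'
  -- `H` is smooth at `x₀` with derivative the identity
  have HC : ContDiffAt ℝ ((⊤ : ℕ∞) : WithTop ℕ∞) H x₀ :=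
    (ContDiffAt.sum fun i _ => hsm i).const_smul _
  have HDsum : DifferentiableAt ℝ (fun z => ∑ i ∈ Finset.range k, a i z) x₀ :=
    DifferentiableAt.fun_sum fun i _ => hda i
  have HD : fderiv ℝ H x₀ = ContinuousLinearMap.id ℝ (EuclideanSpace ℝ (Fin n)) := by
    rw [hHdef]
    rw [fderiv_fun_const_smul HDsum ((k : ℝ)⁻¹), fderiv_fun_sum fun i _ => hda i]
    simp only [hfd, Finset.sum_const, Finset.card_range]
    rw [← Nat.cast_smul_eq_nsmul ℝ, inv_smul_smul₀ hk']
  have hstrict : HasStrictFDerivAt H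
      ((ContinuousLinearEquiv.refl ℝ (EuclideanSpace ℝ (Fin n))) :
        EuclideanSpace ℝ (Fin n) →L[ℝ] EuclideanSpace ℝ (Fin n)) x₀ := by
    have h := HC.hasStrictFDerivAt (by simp)
    rw [HD] at h
    simpa using h
  set P := hstrict.toOpenPartialHomeomorph H with hP
  have hsource : P.source ∈ 𝓝 x₀ :=
    P.open_source.mem_nhds hstrict.mem_toOpenPartialHomeomorph_source
  -- `H` is invariant under `chartRep y f` near `x₀`
  have hsum : ∀ᶠ z in 𝓝 x₀, ∀ i ∈ Finset.range k, a i (chartRep y f z) = a (i + 1) z := by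
    rw [Filter.eventually_all_finset]
    intro i _
    have h := eventually_chartRep_comp (n := n) (g := f^[i]) hf.continuous.continuousAt hfy
    filter_upwards [h] with z hz
    rw [ha]
    simp only
    rw [← hz, ← iterate_succ]
  have hk0 : ∀ᶠ z in 𝓝 x₀, a k z = z := by
    have hida : a k = chartRep y id := by
      funext w; simp [ha, chartRep, hper]
    rw [hida]
    exact eventually_chartRep_id
  have h00 : ∀ᶠ z in 𝓝 x₀, a 0 z = z := eventually_chartRep_id
  have hcr : ContinuousAt (chartRep y f) x₀ :=
    (contDiffAt_chartRep hf.contMDiffAt hfy).continuousAt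
  have htend : Tendsto (chartRep y f) (𝓝 x₀) (𝓝 x₀) := by
    have := hcr
    rwa [ContinuousAt, chartRep_fixed (n := n) hfy] at this
  have heq : ∀ᶠ z in 𝓝 x₀, H (chartRep y f z) = H z := by
    filter_upwards [hsum, hk0, h00] with z h1 h2 h3
    rw [hHdef]
    simp only
    congr 1
    rw [Finset.sum_congr rfl h1]
    have h5 : (∑ i ∈ Finset.range k, a (i + 1) z) + a 0 z
        = (∑ i ∈ Finset.range k, a i z) + a k z := by
      rw [← Finset.sum_range_succ' (fun i => a i z) k, Finset.sum_range_succ]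
    rw [h2, h3] at h5
    exact add_right_cancel h5
  have key : ∀ᶠ z in 𝓝 x₀, chartRep y f z = z := by
    filter_upwards [heq, htend hsource, hsource] with z h1 h2 h3
    exact P.injOn h2 h3 h1
  -- transfer back to the manifold
  rw [hx₀, ← map_extChartAt_nhds_of_boundaryless (I := 𝓡 n) y, eventually_map] at key
  have h1 : ∀ᶠ w in 𝓝 y, w ∈ (extChartAt (𝓡 n) y).source :=
    extChartAt_source_mem_nhds (I := 𝓡 n) y
  have h2 : ∀ᶠ w in 𝓝 y, f w ∈ (extChartAt (𝓡 n) y).source :=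
    hf.continuous.continuousAt.preimage_mem_nhds
      (by rw [hfy]; exact extChartAt_source_mem_nhds y)
  filter_upwards [key, h1, h2] with w hw hw1 hw2
  have hsymm : (extChartAt (𝓡 n) y).symm (extChartAt (𝓡 n) y w) = w :=
    (extChartAt (𝓡 n) y).left_inv hw1
  have : extChartAt (𝓡 n) y (f w) = extChartAt (𝓡 n) y w := by
    simpa only [chartRep, hsymm] using hw
  exact (extChartAt (𝓡 n) y).injOn hw2 hw1 this

lemma fderiv_chartRep_eq_id_of_mem_closure {f : X → X} {y : X}
    (hf : ContMDiff (𝓡 n) (𝓡 n) (⊤ : ℕ∞) f) (hfy : f y = y)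
    (hy : y ∈ closure {z : X | ∀ᶠ w in 𝓝 z, f w = w}) :
    fderiv ℝ (chartRep y f) (extChartAt (𝓡 n) y y) =
      ContinuousLinearMap.id ℝ (EuclideanSpace ℝ (Fin n)) := by
  set φ := extChartAt (𝓡 n) y with hφ
  set x₀ := φ y with hx₀
  set S := {z : X | ∀ᶠ w in 𝓝 z, f w = w} with hS
  -- near the image of any point of `S ∩ φ.source`, the chart representative is the identity
  have key : ∀ z ∈ S ∩ φ.source, ∀ᶠ w in 𝓝 (φ z), chartRep y f w = w := by
    rintro z ⟨hzS, hzs⟩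
    have hsymm : ContinuousAt φ.symm (φ z) := continuousAt_extChartAt_symm' hzs
    have h1 : ∀ᶠ w in 𝓝 (φ z), f (φ.symm w) = φ.symm w := by
      have h0 : ∀ᶠ v in 𝓝 (φ.symm (φ z)), f v = v := by
        rw [φ.left_inv hzs]; exact hzS
      exact hsymm h0
    have h2 : ∀ᶠ w in 𝓝 (φ z), w ∈ φ.target :=
      extChartAt_target_mem_nhds' (φ.map_source hzs)
    filter_upwards [h1, h2] with w hw1 hw2
    simp only [chartRep, ← hφ, hw1]
    exact φ.right_inv hw2
  have hid : ∀ z ∈ S ∩ φ.source,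
      fderiv ℝ (chartRep y f) (φ z) = ContinuousLinearMap.id ℝ (EuclideanSpace ℝ (Fin n)) := by
    intro z hz
    have h : chartRep y f =ᶠ[𝓝 (φ z)] id := key z hz
    rw [h.fderiv_eq, fderiv_id]
  -- the derivative of the chart representative is continuous near `x₀`
  have hC : ContDiffAt ℝ ((⊤ : ℕ∞) : WithTop ℕ∞) (chartRep y f) x₀ :=
    contDiffAt_chartRep hf.contMDiffAt hfy
  obtain ⟨u, hu, hcd⟩ := hC.contDiffOn (m := 1) one_le_top_enat (by simp)
  set U := interior u with hU'
  have hUo : IsOpen U := isOpen_interior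
  have hx₀U : x₀ ∈ U := mem_interior_iff_mem_nhds.mpr hu
  have hcont : ContinuousOn (fun w => fderiv ℝ (chartRep y f) w) U :=
    (hcd.mono interior_subset).continuousOn_fderiv_of_isOpen hUo le_rfl
  -- `x₀` is in the closure of the image of `S ∩ φ.source` intersected with `U`
  have hyc : y ∈ closure (S ∩ φ.source) := by
    rw [mem_closure_iff_nhds] at hy ⊢
    intro t ht
    rcases hy (t ∩ φ.source) (Filter.inter_mem ht (extChartAt_source_mem_nhds y))
      with ⟨w, ⟨hwt, hws⟩, hwS⟩
    exact ⟨w, hwt, hwS, hws⟩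
  have himg : x₀ ∈ closure (φ '' (S ∩ φ.source)) :=
    (continuousAt_extChartAt y).continuousWithinAt.mem_closure_image hyc
  have hQ : x₀ ∈ closure (U ∩ φ '' (S ∩ φ.source)) :=
    hUo.inter_closure ⟨hx₀U, himg⟩
  have hcw : ContinuousWithinAt (fun w => fderiv ℝ (chartRep y f) w)
      (U ∩ φ '' (S ∩ φ.source)) x₀ :=
    ((hcont.continuousAt (hUo.mem_nhds hx₀U))).continuousWithinAt
  have hmem := hcw.mem_closure_image hQ
  have hsub : (fun w => fderiv ℝ (chartRep y f) w) '' (U ∩ φ '' (S ∩ φ.source)) ⊆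
      {ContinuousLinearMap.id ℝ (EuclideanSpace ℝ (Fin n))} := by
    rintro _ ⟨w, ⟨-, ⟨z, hz, rfl⟩⟩, rfl⟩
    exact hid z hz
  have := closure_mono hsub hmem
  rwa [closure_singleton, mem_singleton_iff] at this
end Aux

/-- Let `X` be a connected smooth manifold, let the finite group `G` act smoothly and
effectively on `X`, and let `x` be a point fixed by every element of `G`. Then the
homomorphism sending `g` to the differential at `x` of the action of `g` is injective. -/
theorem linearisation_injective_at_fixed_point {n : ℕ} (X : Type*) [TopologicalSpace X]
    [T2Space X] [ChartedSpace (EuclideanSpace ℝ (Fin n)) X]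
    [IsManifold (𝓡 n) ((⊤ : ℕ∞) : WithTop ℕ∞) X] [ConnectedSpace X]
    (G : Type*) [Group G] [Finite G] (ρ : G →* (X ≃ₜ X))
    (hsmooth : ∀ g : G, ContMDiff (𝓡 n) (𝓡 n) (⊤ : ℕ∞) (ρ g))
    (hρ : Function.Injective ρ) (x : X) (hx : ∀ g : G, ρ g x = x) :
    Function.Injective (fun g : G =>
      show TangentSpace (𝓡 n) x →L[ℝ] TangentSpace (𝓡 n) x from
        mfderiv (𝓡 n) (𝓡 n) (ρ g) x) := by
  intro a b hab
  have hab' : (mfderiv (𝓡 n) (𝓡 n) (ρ a) x : TangentSpace (𝓡 n) x →L[ℝ] TangentSpace (𝓡 n) x)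
      = mfderiv (𝓡 n) (𝓡 n) (ρ b) x := hab
  have hsm : ∀ g : G, ContMDiffAt (𝓡 n) (𝓡 n) (⊤ : ℕ∞) (ρ g) x := fun g => (hsmooth g).contMDiffAt
  have happ : ∀ (g h : G) (w : X), ρ (g * h) w = ρ g (ρ h w) := fun g h w => by
    rw [map_mul]; rfl
  set D : G → EuclideanSpace ℝ (Fin n) →L[ℝ] EuclideanSpace ℝ (Fin n) :=
    fun g => fderiv ℝ (chartRep x (ρ g)) (extChartAt (𝓡 n) x x) with hD
  have hMD : ∀ g : G,
      (mfderiv (𝓡 n) (𝓡 n) (ρ g) x : TangentSpace (𝓡 n) x →L[ℝ] TangentSpace (𝓡 n) x)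
        = D g := fun g => mfderiv_eq_fderiv_chartRep (hsm g) (hx g)
  have hDab : D a = D b := by rw [← hMD a, ← hMD b]; exact hab'
  have hDmul : ∀ g h : G, D (g * h) = (D g).comp (D h) := by
    intro g h
    have heqf : ⇑(ρ (g * h)) = ⇑(ρ g) ∘ ⇑(ρ h) := funext (happ g h)
    have hcomp : chartRep x (⇑(ρ (g * h))) =ᶠ[𝓝 (extChartAt (𝓡 n) x x)]
        (chartRep x (⇑(ρ g)) ∘ chartRep x (⇑(ρ h))) := by
      rw [heqf]
      exact eventually_chartRep_comp (n := n) (g := ⇑(ρ g))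
        (hsmooth h).continuous.continuousAt (hx h)
    have hpt : chartRep x (⇑(ρ h)) (extChartAt (𝓡 n) x x) = extChartAt (𝓡 n) x x :=
      chartRep_fixed (n := n) (hx h)
    have hdh : DifferentiableAt ℝ (chartRep x (⇑(ρ h))) (extChartAt (𝓡 n) x x) :=
      (contDiffAt_chartRep (hsm h) (hx h)).differentiableAt (by simp)
    have hdg : DifferentiableAt ℝ (chartRep x (⇑(ρ g)))
        (chartRep x (⇑(ρ h)) (extChartAt (𝓡 n) x x)) := by
      rw [hpt]
      exact (contDiffAt_chartRep (hsm g) (hx g)).differentiableAt (by simp)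
    simp only [hD]
    rw [hcomp.fderiv_eq, fderiv_comp _ hdg hdh, hpt]
  have hD1 : D 1 = ContinuousLinearMap.id ℝ (EuclideanSpace ℝ (Fin n)) := by
    have h1 : ⇑(ρ (1 : G)) = (id : X → X) := by
      funext w; rw [map_one]; rfl
    simp only [hD, h1]
    rw [Filter.EventuallyEq.fderiv_eq (eventually_chartRep_id (n := n)), fderiv_id']
  set c := b⁻¹ * a with hc
  have hDc : D c = ContinuousLinearMap.id ℝ (EuclideanSpace ℝ (Fin n)) := by
    have h1 := hDmul b⁻¹ b
    rw [inv_mul_cancel, hD1] at h1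
    have h2 := hDmul b⁻¹ a
    rw [hDab] at h2
    rw [hc, h2, ← h1]
  set f : X → X := ⇑(ρ c) with hf
  have hfC : ContMDiff (𝓡 n) (𝓡 n) (⊤ : ℕ∞) f := hsmooth c
  have hfx : f x = x := hx c
  set k := orderOf c with hk
  have hk0 : 0 < k := orderOf_pos c
  have hpow : ∀ (i : ℕ) (w : X), ρ (c ^ i) w = f^[i] w := by
    intro i
    induction i with
    | zero => intro w; rw [pow_zero, map_one]; rfl
    | succ i ih =>
      intro w
      rw [pow_succ, happ, ih, Function.iterate_succ_apply]
  have hper : ∀ w, f^[k] w = w := by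
    intro w
    rw [← hpow k w, hk, pow_orderOf_eq_one, map_one]
    rfl
  have hDcx : fderiv ℝ (chartRep x f) (extChartAt (𝓡 n) x x)
      = ContinuousLinearMap.id ℝ (EuclideanSpace ℝ (Fin n)) := hDc
  set S := {z : X | ∀ᶠ w in 𝓝 z, f w = w} with hS
  have hSopen : IsOpen S := isOpen_setOf_eventually_nhds
  have hxS : x ∈ S := bochner hfC hfx hk0 hper hDcx
  have hSclosed : IsClosed S := by
    refine isClosed_of_closure_subset fun y hy => ?_
    have hfy : f y = y := by
      have hEq : Set.EqOn f id S := fun z hz => hz.self_of_nhds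
      exact hEq.closure hfC.continuous continuous_id hy
    exact bochner hfC hfy hk0 hper (fderiv_chartRep_eq_id_of_mem_closure hfC hfy hy)
  have hSuniv : S = Set.univ := IsClopen.eq_univ ⟨hSclosed, hSopen⟩ ⟨x, hxS⟩
  have hfid : ∀ w, f w = w := fun w =>
    (show w ∈ S from hSuniv ▸ Set.mem_univ w).self_of_nhds
  have hρc : ρ c = 1 := Homeomorph.ext fun w => hfid w
  have hc1 : c = 1 := hρ (by rw [hρc, map_one])
  exact (inv_mul_eq_one.mp hc1).symm
end

section
/- Let H ≤ G be an inclusion of finite groups, and let Aut(G, H) = {φ ∈ Aut(G) : φ(H) = H}. Then [Aut(G) : Aut(G, H)] ≤ ([G : H]!)^{d(H) + [G : H]}, and if H is normal in G then [Aut(G) : Aut(G, H)] ≤ [G : H]^{d(H) + [G : H]}. -/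
open scoped Pointwise

private lemma card_monoidHom_le (G M : Type*) [Group G] [Group M] [Finite G] [Finite M] :
    Nat.card (G →* M) ≤ Nat.card M ^ Group.rank G := by
  obtain ⟨S, hcard, htop⟩ := Group.rank_spec G
  have hinj : Function.Injective fun (f : G →* M) (s : ↥(S : Set G)) => f ↑s := by
    intro f g h
    refine MonoidHom.eq_of_eqOn_top (htop ▸ MonoidHom.eqOn_closure fun x hx => ?_)
    exact congrFun h ⟨x, hx⟩
  haveI : Finite (G →* M) := Finite.of_injective _ (DFunLike.coe_injective (F := G →* M))
  calc Nat.card (G →* M) ≤ Nat.card (↥(S : Set G) → M) :=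
        Nat.card_le_card_of_injective _ hinj
    _ = Nat.card M ^ Nat.card ↥(S : Set G) := Nat.card_fun
    _ = Nat.card M ^ Group.rank G := by
        rw [Nat.card_coe_set_eq, Set.ncard_coe_finset, hcard]

private lemma rank_le_rank_add_index {G : Type*} [Group G] [Finite G] (H : Subgroup G) :
    Group.rank G ≤ Group.rank H + H.index := by
  classical
  haveI := Fintype.ofFinite G
  haveI : Fintype (G ⧸ H) := Fintype.ofFinite _
  obtain ⟨S, hcard, htop⟩ := Group.rank_spec H
  set T : Finset G := Finset.univ.image (fun q : G ⧸ H => q.out) with hT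
  set U : Finset G := S.image ((↑) : H → G) ∪ T with hU
  have hHsub : (H : Set G) ⊆ (Subgroup.closure (U : Set G) : Set G) := by
    have h1 : Subgroup.closure (⇑H.subtype '' (S : Set H)) = H := by
      rw [← MonoidHom.map_closure, htop, ← MonoidHom.range_eq_map, Subgroup.range_subtype]
    rw [← h1]
    apply Subgroup.closure_mono
    intro x hx
    obtain ⟨y, hy, rfl⟩ := hx
    simp only [hU, Finset.coe_union, Set.mem_union, Finset.coe_image, Set.mem_image]
    exact Or.inl ⟨y, hy, rfl⟩
  have hUtop : Subgroup.closure (U : Set G) = ⊤ := by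
    rw [eq_top_iff]
    intro g _
    obtain ⟨h, hh⟩ := QuotientGroup.mk_out_eq_mul H g
    have h1 : (QuotientGroup.mk g : G ⧸ H).out ∈ Subgroup.closure (U : Set G) := by
      apply Subgroup.subset_closure
      simp only [hU, Finset.coe_union, Set.mem_union, hT, Finset.coe_image, Set.mem_image]
      exact Or.inr ⟨QuotientGroup.mk g, by simp, rfl⟩
    have h2 : (h : G) ∈ Subgroup.closure (U : Set G) := hHsub h.2
    have : g = (QuotientGroup.mk g : G ⧸ H).out * (h : G)⁻¹ := by
      rw [hh]; group
    rw [this]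
    exact mul_mem h1 (inv_mem h2)
  calc Group.rank G ≤ U.card := Group.rank_le hUtop
    _ ≤ (S.image ((↑) : H → G)).card + T.card := Finset.card_union_le _ _
    _ ≤ S.card + Fintype.card (G ⧸ H) := by
        gcongr
        · exact Finset.card_image_le
        · exact (Finset.card_image_le).trans (by simp)
    _ = Group.rank H + H.index := by
        rw [hcard, Subgroup.index, Nat.card_eq_fintype_card]

/-- Let `H ≤ G` be an inclusion of finite groups, and let `Aut(G, H) ≤ Aut(G)` be the subgroup
of automorphisms `φ` of `G` with `φ(H) = H` (the stabilizer of `H` under the pointwise action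
of `Aut(G)` on subgroups of `G`). Then
`[Aut(G) : Aut(G, H)] ≤ ([G : H]!) ^ (d(H) + [G : H])`, and if `H` is normal then
`[Aut(G) : Aut(G, H)] ≤ [G : H] ^ (d(H) + [G : H])`. -/
theorem index_of_aut_preserving_subgroup (G : Type*) [Group G] [Finite G] (H : Subgroup G) :
    (MulAction.stabilizer (MulAut G) H).index ≤
        (Nat.factorial H.index) ^ (Group.rank H + H.index) ∧
      (H.Normal → (MulAction.stabilizer (MulAut G) H).index ≤
        H.index ^ (Group.rank H + H.index)) := by
  classical
  have horb : (MulAction.stabilizer (MulAut G) H).index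
      = Nat.card (MulAction.orbit (MulAut G) H) := by
    rw [MulAction.index_stabilizer, Nat.card_coe_set_eq]
  have hrank : Group.rank G ≤ Group.rank H + H.index := rank_le_rank_add_index H
  have hn : 1 ≤ H.index := Nat.one_le_iff_ne_zero.2 H.index_ne_zero_of_finite
  constructor
  · -- general bound
    have key : ∀ K : MulAction.orbit (MulAut G) H,
        ∃ f : G →* Equiv.Perm (G ⧸ H), ∀ g : G,
          g ∈ (K : Subgroup G) ↔ f g ((1 : G) : G ⧸ H) = ((1 : G) : G ⧸ H) := by
      rintro ⟨K, φ, hφ⟩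
      simp only at hφ ⊢
      subst hφ
      have hrel : ∀ a b : G,
          (QuotientGroup.leftRel H) a b ↔ (QuotientGroup.leftRel (φ • H)) (φ a) (φ b) := by
        intro a b
        rw [QuotientGroup.leftRel_apply, QuotientGroup.leftRel_apply, ← map_inv, ← map_mul]
        exact (Subgroup.smul_mem_pointwise_smul_iff (a := φ)).symm
      let e : (G ⧸ H) ≃ (G ⧸ (φ • H)) := Quotient.congr φ.toEquiv hrel
      have he : ∀ a : G, e (QuotientGroup.mk a) = QuotientGroup.mk (φ a) := fun a => rfl
      have he1 : e ((1 : G) : G ⧸ H) = ((1 : G) : G ⧸ (φ • H)) := by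
        rw [he 1, map_one]
      let c : Equiv.Perm (G ⧸ (φ • H)) →* Equiv.Perm (G ⧸ H) :=
        { toFun := fun p => (e.trans p).trans e.symm
          map_one' := by ext x; simp
          map_mul' := by intro p q; ext x; simp }
      refine ⟨c.comp (MulAction.toPermHom G (G ⧸ (φ • H))), fun g => ?_⟩
      have h1 : (c.comp (MulAction.toPermHom G (G ⧸ (φ • H)))) g ((1 : G) : G ⧸ H)
          = e.symm (g • (e ((1 : G) : G ⧸ H))) := rfl
      rw [h1, e.symm_apply_eq, he1]
      conv_lhs => rw [← MulAction.stabilizer_quotient (φ • H)]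
      exact Iff.rfl
    choose F hF using key
    have hFinj : Function.Injective F := by
      intro K1 K2 h
      apply Subtype.ext
      ext g
      rw [hF K1 g, hF K2 g, h]
    haveI : Finite (G →* Equiv.Perm (G ⧸ H)) :=
      Finite.of_injective _ (DFunLike.coe_injective (F := G →* Equiv.Perm (G ⧸ H)))
    have hperm : Nat.card (Equiv.Perm (G ⧸ H)) = Nat.factorial H.index := by
      haveI := Fintype.ofFinite (G ⧸ H)
      rw [Nat.card_eq_fintype_card, Fintype.card_perm, Subgroup.index, Nat.card_eq_fintype_card]
    calc (MulAction.stabilizer (MulAut G) H).index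
        = Nat.card (MulAction.orbit (MulAut G) H) := horb
      _ ≤ Nat.card (G →* Equiv.Perm (G ⧸ H)) := Nat.card_le_card_of_injective F hFinj
      _ ≤ Nat.card (Equiv.Perm (G ⧸ H)) ^ Group.rank G := card_monoidHom_le G _
      _ = (Nat.factorial H.index) ^ Group.rank G := by rw [hperm]
      _ ≤ (Nat.factorial H.index) ^ (Group.rank H + H.index) :=
          Nat.pow_le_pow_right (Nat.factorial_pos _) hrank
  · -- normal case
    intro hN
    haveI := hN
    have key : ∀ K : MulAction.orbit (MulAut G) H,
        ∃ f : G →* (G ⧸ H), ∀ g : G, g ∈ (K : Subgroup G) ↔ f g = 1 := by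
      rintro ⟨K, φ, hφ⟩
      simp only at hφ ⊢
      subst hφ
      haveI : (φ • H).Normal := hN.map φ.toMonoidHom φ.surjective
      let ψ : (G ⧸ H) ≃* (G ⧸ (φ • H)) := QuotientGroup.congr H (φ • H) (φ : G ≃* G) rfl
      refine ⟨ψ.symm.toMonoidHom.comp (QuotientGroup.mk' (φ • H)), fun g => ?_⟩
      rw [MonoidHom.comp_apply, MulEquiv.coe_toMonoidHom, MulEquiv.map_eq_one_iff,
        QuotientGroup.mk'_apply, QuotientGroup.eq_one_iff]
    choose F hF using key
    have hFinj : Function.Injective F := by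
      intro K1 K2 h
      apply Subtype.ext
      ext g
      rw [hF K1 g, hF K2 g, h]
    haveI : Finite (G →* (G ⧸ H)) :=
      Finite.of_injective _ (DFunLike.coe_injective (F := G →* (G ⧸ H)))
    calc (MulAction.stabilizer (MulAut G) H).index
        = Nat.card (MulAction.orbit (MulAut G) H) := horb
      _ ≤ Nat.card (G →* (G ⧸ H)) := Nat.card_le_card_of_injective F hFinj
      _ ≤ Nat.card (G ⧸ H) ^ Group.rank G := card_monoidHom_le G _
      _ = H.index ^ Group.rank G := rfl
      _ ≤ H.index ^ (Group.rank H + H.index) := Nat.pow_le_pow_right hn hrank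
end
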